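/- In an infinite sum ring S, for every finitely generated projective S-module M there is an isomorphism of S-modules M ⊗_{f_∞} S ≅ M ⊕ (M ⊗_{f_∞} S). In particular, the class of M ⊗_{f_∞} S gives an Eilenberg swindle: [M ⊗_{f_∞} S] = [M] + [M ⊗_{f_∞} S] in K_0(S), so K_0(S) = 0. -/
import Mathlib


open MulOpposite

/-- Let `S` be an infinite sum ring: a sum ring (elements `u, ū, v, v̄` with `u·ū = 1`,
`v·v̄ = 1`, `v̄·v + ū·u = 1`, giving the ring homomorphism `f_⊕(r,s) = ū·r·u + v̄·s·v`)
together with a ring endomorphism `f_∞ : S → S` satisfying `f_⊕(r, f_∞(r)) = f_∞(r)`.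
Let `M` be a finitely generated projective right `S`-module (modelled over `Sᵐᵒᵖ`) and let
`P` realize the base change `M ⊗_{f_∞} S` (via a balanced map `τ : M → P`, `m ↦ m ⊗ 1`,
with the universal property of extension of scalars along `f_∞`). Then there is an
isomorphism of right `S`-modules `M ⊗_{f_∞} S ≅ M ⊕ (M ⊗_{f_∞} S)`, and `M ⊗_{f_∞} S`
is again finitely generated projective; this is the Eilenberg swindle showing
`[M] = 0` in `K₀(S)`, so `K₀(S) = 0`. -/
theorem infiniteSumRing_eilenberg_swindle (S : Type) [Ring S] (u ubar v vbar : S)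
    (h1 : u * ubar = 1) (h2 : v * vbar = 1) (h3 : vbar * v + ubar * u = 1)
    (finf : S →+* S)
    (hinf : ∀ r : S, ubar * r * u + vbar * finf r * v = finf r)
    (M : Type) [AddCommGroup M] [Module Sᵐᵒᵖ M]
    [Module.Finite Sᵐᵒᵖ M] [Module.Projective Sᵐᵒᵖ M]
    (P : Type) [AddCommGroup P] [Module Sᵐᵒᵖ P]
    (τ : M →+ P)
    (hbal : ∀ (m : M) (r : S), τ (op r • m) = op (finf r) • τ m)
    (huniv : ∀ (Q : Type) [AddCommGroup Q] [Module Sᵐᵒᵖ Q] (b : M →+ Q),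
      (∀ (m : M) (r : S), b (op r • m) = op (finf r) • b m) →
      ∃! h : P →ₗ[Sᵐᵒᵖ] Q, ∀ m : M, h (τ m) = b m) :
    Nonempty ((M × P) ≃ₗ[Sᵐᵒᵖ] P) ∧ Module.Finite Sᵐᵒᵖ P ∧ Module.Projective Sᵐᵒᵖ P := by
  -- derived ring identities
  have huv : u * vbar = 0 := by
    have e1 : u * (vbar * v) + u * (ubar * u) = u := by
      rw [← mul_add, h3, mul_one]
    have h4 : u * vbar * v = 0 := by
      rw [← mul_assoc, ← mul_assoc, show u*ubar*u = u by rw [h1, one_mul]] at e1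
      exact add_eq_right.mp e1
    calc u * vbar = u * vbar * (v * vbar) := by rw [h2, mul_one]
      _ = (u * vbar * v) * vbar := by noncomm_ring
      _ = 0 := by rw [h4, zero_mul]
  have hvu : v * ubar = 0 := by
    have e1 : v * (vbar * v) + v * (ubar * u) = v := by
      rw [← mul_add, h3, mul_one]
    have h4 : v * ubar * u = 0 := by
      rw [← mul_assoc, ← mul_assoc, show v*vbar*v = v by rw [h2, one_mul]] at e1
      exact add_eq_left.mp e1
    calc v * ubar = v * ubar * (u * ubar) := by rw [h1, mul_one]
      _ = (v * ubar * u) * ubar := by noncomm_ring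
      _ = 0 := by rw [h4, zero_mul]
  have key1 : ∀ r : S, finf r * ubar = ubar * r := by
    intro r
    have := congrArg (· * ubar) (hinf r)
    simp only [add_mul, mul_assoc, h1, hvu, mul_one, mul_zero, add_zero] at this
    rw [← this]
  have key2 : ∀ r : S, finf r * vbar = vbar * finf r := by
    intro r
    have := congrArg (· * vbar) (hinf r)
    simp only [add_mul, mul_assoc, h2, huv, mul_one, mul_zero, zero_add] at this
    rw [← this]
  have key3 : ∀ r : S, u * finf r = r * u := by
    intro r
    have := congrArg (u * ·) (hinf r)
    simp only [mul_add, ← mul_assoc, h1, huv, one_mul, zero_mul, add_zero] at this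
    rw [this]
  have key4 : ∀ r : S, v * finf r = finf r * v := by
    intro r
    have := congrArg (v * ·) (hinf r)
    simp only [mul_add, ← mul_assoc, h2, hvu, one_mul, zero_mul, zero_add] at this
    rw [this]
  -- the linear map α' : M →ₗ P, m ↦ τ m · ubar
  let α' : M →ₗ[Sᵐᵒᵖ] P :=
    { toFun := fun m => op ubar • τ m
      map_add' := fun a b => by simp [smul_add]
      map_smul' := fun c m => by
        simp only [RingHom.id_apply]
        rw [← op_unop c, hbal, smul_smul, smul_smul, ← op_mul, ← op_mul, key1] }
  -- β : P →ₗ P with β (τ m) = τ m · vbar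
  obtain ⟨β, hβ, -⟩ := huniv P (AddMonoidHom.mk' (fun m => op vbar • τ m)
      (fun a b => by simp [smul_add])) (by
    intro m r
    simp only [AddMonoidHom.mk'_apply]
    rw [hbal, smul_smul, smul_smul, ← op_mul, ← op_mul, key2])
  simp only [AddMonoidHom.mk'_apply] at hβ
  -- Ψ : P →ₗ M × P with Ψ (τ m) = (m·u, τ m·v)
  obtain ⟨Ψ, hΨ, -⟩ := huniv (M × P) (AddMonoidHom.mk' (fun m => (op u • m, op v • τ m))
      (fun a b => by simp [smul_add, Prod.ext_iff])) (by
    intro m r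
    simp only [AddMonoidHom.mk'_apply, Prod.smul_mk, Prod.mk.injEq]
    constructor
    · rw [smul_smul, smul_smul, ← op_mul, ← op_mul, key3]
    · rw [hbal, smul_smul, smul_smul, ← op_mul, ← op_mul, key4])
  simp only [AddMonoidHom.mk'_apply] at hΨ
  -- Φ : M × P →ₗ P
  let Φ : (M × P) →ₗ[Sᵐᵒᵖ] P :=
    α'.comp (LinearMap.fst _ _ _) + β.comp (LinearMap.snd _ _ _)
  have hΦ : ∀ (m : M) (p : P), Φ (m, p) = op ubar • τ m + β p := fun m p => rfl
  -- Φ ∘ Ψ = id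
  obtain ⟨h0, -, h0uniq⟩ := huniv P τ hbal
  have hΦΨ : Φ.comp Ψ = LinearMap.id := by
    rw [h0uniq (Φ.comp Ψ) ?_, h0uniq LinearMap.id (fun m => rfl)]
    intro m
    simp only [LinearMap.comp_apply, hΨ, hΦ]
    rw [hbal, smul_smul, ← op_mul, key1, map_smul, hβ, smul_smul, ← op_mul]
    rw [← add_smul, ← op_add, add_comm, h3, op_one, one_smul]
  -- Ψ ∘ β = inr
  obtain ⟨h1', -, h1uniq⟩ := huniv (M × P) (AddMonoidHom.mk' (fun m => ((0 : M), τ m))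
      (fun a b => by simp [Prod.ext_iff])) (by
    intro m r
    simp only [AddMonoidHom.mk'_apply, Prod.smul_mk, smul_zero, hbal])
  have hΨβ : Ψ.comp β = LinearMap.inr Sᵐᵒᵖ M P := by
    rw [h1uniq (Ψ.comp β) ?_, h1uniq (LinearMap.inr Sᵐᵒᵖ M P) ?_]
    · intro m
      simp only [LinearMap.inr_apply, AddMonoidHom.mk'_apply]
    · intro m
      simp only [LinearMap.comp_apply, hβ, map_smul, hΨ, AddMonoidHom.mk'_apply,
        Prod.smul_mk, smul_smul, ← op_mul, huv, h2, op_zero, zero_smul, op_one, one_smul]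
  -- Ψ ∘ Φ = id
  have hΨΦ : Ψ.comp Φ = LinearMap.id := by
    refine LinearMap.ext fun x => ?_
    obtain ⟨m, p⟩ := x
    · simp only [LinearMap.comp_apply, LinearMap.id_apply]
      rw [hΦ, map_add, map_smul, hΨ]
      have : Ψ (β p) = (0, p) := congrFun (congrArg (fun f => f.toFun) hΨβ) p
      rw [this]
      simp only [Prod.smul_mk, smul_smul, ← op_mul, h1, hvu, op_one, one_smul, op_zero,
        zero_smul, Prod.mk_add_mk, add_zero, zero_add]
  refine ⟨⟨LinearEquiv.ofLinear Φ Ψ hΦΨ hΨΦ⟩, ?_, ?_⟩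
  all_goals {
  -- finitely generated projective
  obtain ⟨n, π, hπ⟩ := Module.Finite.exists_fin' Sᵐᵒᵖ M
  obtain ⟨s, hs⟩ := Module.projective_lifting_property π LinearMap.id hπ
  -- σ : P →ₗ (Fin n → Sᵐᵒᵖ)
  obtain ⟨σ, hσ, -⟩ := huniv (Fin n → Sᵐᵒᵖ) (AddMonoidHom.mk'
      (fun m => fun j => op (finf (s m j).unop))
      (fun a b => by
        funext j
        simp [map_add])) (by
    intro m r
    funext j
    simp only [AddMonoidHom.mk'_apply, map_smul, Pi.smul_apply, smul_eq_mul, ← op_mul,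
      unop_mul, unop_op, map_mul])
  simp only [AddMonoidHom.mk'_apply] at hσ
  -- ρ : (Fin n → Sᵐᵒᵖ) →ₗ P
  let ρ : (Fin n → Sᵐᵒᵖ) →ₗ[Sᵐᵒᵖ] P :=
    { toFun := fun f => ∑ j, f j • τ (π (Pi.single j 1))
      map_add' := fun a b => by simp [add_smul, Finset.sum_add_distrib]
      map_smul' := fun c f => by
        simp only [RingHom.id_apply, Pi.smul_apply, smul_eq_mul, Finset.smul_sum, smul_smul] }
  have hρσ : ∀ p : P, ρ (σ p) = p := by
    obtain ⟨h2', -, h2uniq⟩ := huniv P τ hbal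
    have e : ρ.comp σ = LinearMap.id := by
      rw [h2uniq (ρ.comp σ) ?_, h2uniq LinearMap.id (fun m => rfl)]
      intro m
      simp only [LinearMap.comp_apply, hσ]
      show (∑ j, op (finf (s m j).unop) • τ (π (Pi.single j 1))) = τ m
      have : ∀ j : Fin n, op (finf (s m j).unop) • τ (π (Pi.single j 1))
          = τ (s m j • π (Pi.single j 1)) := by
        intro j
        rw [← hbal, op_unop]
      simp only [this, ← map_smul, ← map_sum]
      have hsum : (∑ j : Fin n, s m j • Pi.single j (1 : Sᵐᵒᵖ)) = s m := by
        have e2 : ∀ j : Fin n, s m j • (Pi.single j (1 : Sᵐᵒᵖ) : Fin n → Sᵐᵒᵖ)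
            = Pi.single j (s m j : Sᵐᵒᵖ) := by
          intro j
          rw [← Pi.single_smul, smul_eq_mul, mul_one]
        simp only [e2, Finset.univ_sum_single]
      rw [hsum, ← LinearMap.comp_apply, hs, LinearMap.id_apply]
    exact fun p => congrFun (congrArg (fun f => f.toFun) e) p
  first
  | exact Module.Finite.of_surjective ρ (fun p => ⟨σ p, hρσ p⟩)
  | exact Module.Projective.of_split σ ρ (LinearMap.ext hρσ) }
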